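/- There exists a constant C > 0 such that for all integers n ≥ 16, k ≥ 2, and ℓ with k ≤ n and ℓ ≥ k³, there exists a uniform (n,k,ℓ)-splitter of size at most C·k⁶·log n. -/

import Mathlib

open Finset

/-- The number of elements of `[n]` mapped to `i` by `f`. -/
def preimCard {n ℓ : ℕ} (f : Fin n → Fin ℓ) (i : Fin ℓ) : ℕ :=
  (Finset.univ.filter fun x => f x = i).card

/-- The size of the image of `f`. -/
def imageSize {n ℓ : ℕ} (f : Fin n → Fin ℓ) : ℕ :=
  (Finset.univ.image f).card

/-- An `(n,k,ℓ)`-splitter: for every `k`-subset `S` of `[n]` some `f` in the family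
splits `S` as evenly as possible into the `ℓ` parts `f⁻¹(i) ∩ S`. -/
def IsSplitter (n k ℓ : ℕ) (F : Finset (Fin n → Fin ℓ)) : Prop :=
  ∀ S : Finset (Fin n), S.card = k → ∃ f ∈ F, ∀ i : Fin ℓ,
    k / ℓ ≤ (S.filter fun x => f x = i).card ∧
      (S.filter fun x => f x = i).card ≤ (k + ℓ - 1) / ℓ

/-- A uniform family: each `f` has all preimages of elements of its image of size
`⌊n/|Im f|⌋` or `⌈n/|Im f|⌉`. -/
def IsUniformFamily (n ℓ : ℕ) (F : Finset (Fin n → Fin ℓ)) : Prop :=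
  ∀ f ∈ F, ∀ i ∈ Finset.univ.image f,
    n / imageSize f ≤ preimCard f i ∧
      preimCard f i ≤ (n + imageSize f - 1) / imageSize f

/-- An `a`-uniform family: preimage sizes deviate by at most `a` from
`⌊n/|Im f|⌋`/`⌈n/|Im f|⌉`, and any two preimage sizes differ by at most `a`. -/
def IsAUniformFamily (n ℓ a : ℕ) (F : Finset (Fin n → Fin ℓ)) : Prop :=
  ∀ f ∈ F,
    (∀ i ∈ Finset.univ.image f,
      n / imageSize f - a ≤ preimCard f i ∧
        preimCard f i ≤ (n + imageSize f - 1) / imageSize f + a) ∧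
    (∀ i ∈ Finset.univ.image f, ∀ j ∈ Finset.univ.image f,
      |(preimCard f i : ℤ) - (preimCard f j : ℤ)| ≤ (a : ℤ))

/-- A strongly uniform family: for each `f` and every `i ∈ [ℓ]`,
`⌊n/ℓ⌋ ≤ |f⁻¹(i)| ≤ ⌈n/ℓ⌉`. -/
def IsStronglyUniformFamily (n ℓ : ℕ) (F : Finset (Fin n → Fin ℓ)) : Prop :=
  ∀ f ∈ F, ∀ i : Fin ℓ, n / ℓ ≤ preimCard f i ∧ preimCard f i ≤ (n + ℓ - 1) / ℓ


lemma count_mod_range (ℓ : ℕ) (hl : 0 < ℓ) : ∀ (n : ℕ) (i : ℕ), i < ℓ →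
    ((Finset.range n).filter (fun x => x % ℓ = i)).card
      = n / ℓ + if i < n % ℓ then 1 else 0 := by
  intro n
  induction n with
  | zero => simp
  | succ n ih =>
    intro i hi
    have hkey : ((n+1) / ℓ = n / ℓ + 1 ∧ (n+1) % ℓ = 0 ∧ n % ℓ + 1 = ℓ) ∨
        ((n+1) / ℓ = n / ℓ ∧ (n+1) % ℓ = n % ℓ + 1) := by
      have hd := Nat.div_add_mod n ℓ
      rcases Nat.lt_or_ge (n % ℓ + 1) ℓ with h | h
      · right
        constructor
        · conv_lhs => rw [← hd]
          rw [show ℓ * (n / ℓ) + n % ℓ + 1 = (n % ℓ + 1) + ℓ * (n / ℓ) by ring,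
            Nat.add_mul_div_left _ _ hl, Nat.div_eq_of_lt h, Nat.zero_add]
        · conv_lhs => rw [← hd]
          rw [show ℓ * (n / ℓ) + n % ℓ + 1 = (n % ℓ + 1) + (n / ℓ) * ℓ by ring,
            Nat.add_mul_mod_self_right, Nat.mod_eq_of_lt h]
      · left
        have h2 : n % ℓ + 1 = ℓ := by have := Nat.mod_lt n hl; omega
        have h3 : n + 1 = ℓ * (n / ℓ + 1) := by rw [Nat.mul_add, mul_one]; omega
        refine ⟨?_, ?_, h2⟩
        · rw [h3, Nat.mul_div_cancel_left _ hl]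
        · rw [h3, Nat.mul_mod_right]
    rw [Finset.range_add_one, Finset.filter_insert]
    by_cases h : n % ℓ = i
    · rw [if_pos h, Finset.card_insert_of_notMem (by simp), ih i hi]
      rcases hkey with ⟨h1, h2, h3⟩ | ⟨h1, h2⟩ <;> rw [h1, h2] <;>
        have := Nat.mod_lt n hl <;> split_ifs <;> omega
    · rw [if_neg h, ih i hi]
      rcases hkey with ⟨h1, h2, h3⟩ | ⟨h1, h2⟩ <;> rw [h1, h2] <;>
        have := Nat.mod_lt n hl <;> split_ifs <;> omega
lemma count_mod_fin (n ℓ : ℕ) (hl : 0 < ℓ) (i : ℕ) (hi : i < ℓ) :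
    ((Finset.univ : Finset (Fin n)).filter (fun x : Fin n => (x : ℕ) % ℓ = i)).card
      = n / ℓ + if i < n % ℓ then 1 else 0 := by
  rw [← count_mod_range ℓ hl n i hi, ← Nat.Iio_eq_range, ← Fin.map_valEmbedding_univ,
    Finset.filter_map, Finset.card_map]
  rfl

def modmap (n ℓ : ℕ) (hl : 0 < ℓ) : Fin n → Fin ℓ := fun x => ⟨(x : ℕ) % ℓ, Nat.mod_lt _ hl⟩

lemma image_modmap (n ℓ : ℕ) (hl : 0 < ℓ) :
    Finset.univ.image (modmap n ℓ hl) = Finset.univ.filter (fun i : Fin ℓ => (i : ℕ) < n) := by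
  ext i
  simp only [Finset.mem_image, Finset.mem_filter, Finset.mem_univ, true_and]
  constructor
  · rintro ⟨x, -, rfl⟩
    exact lt_of_le_of_lt (Nat.mod_le _ _) x.isLt
  · intro h
    exact ⟨⟨(i : ℕ), h⟩, by simp [modmap, Fin.ext_iff, Nat.mod_eq_of_lt i.isLt]⟩

lemma preim_modmap (n ℓ : ℕ) (hl : 0 < ℓ) (i : Fin ℓ) :
    ((Finset.univ : Finset (Fin n)).filter (fun x : Fin n => modmap n ℓ hl x = i)).card
      = n / ℓ + if (i : ℕ) < n % ℓ then 1 else 0 := by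
  rw [← count_mod_fin n ℓ hl i i.isLt]
  apply congrArg
  ext x
  simp [modmap, Fin.ext_iff]
/-- number of permutations sending x ↦ a, y ↦ b -/
noncomputable def Nab (x y a b : Fin n) : ℕ :=
  (Finset.univ.filter fun π : Equiv.Perm (Fin n) => π x = a ∧ π y = b).card

lemma Nab_const (x y a b a' b' : Fin n) (hxy : x ≠ y) (hab : a ≠ b) (hab' : a' ≠ b') :
    Nab x y a b = Nab x y a' b' := by
  classical
  set σ := Equiv.swap a a' with hσ
  have hσb : σ b ≠ a' := by
    intro h
    exact hab ((by simpa [hσ] using congrArg σ h : b = a)).symm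
  set τ := (Equiv.swap (σ b) b') * σ with hτ
  have hτa : τ a = a' := by
    rw [hτ, Equiv.Perm.mul_apply, hσ, Equiv.swap_apply_left]
    exact Equiv.swap_apply_of_ne_of_ne (Ne.symm hσb) hab'
  have hτb : τ b = b' := by
    rw [hτ, Equiv.Perm.mul_apply]
    exact Equiv.swap_apply_left _ _
  have hτa' : τ⁻¹ a' = a := by rw [← hτa]; simp
  have hτb' : τ⁻¹ b' = b := by rw [← hτb]; simp
  unfold Nab
  apply Finset.card_nbij' (fun π => τ * π) (fun π => τ⁻¹ * π)
  · intro π hπ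
    simp only [Finset.mem_coe, Finset.mem_filter, Finset.mem_univ, true_and] at hπ ⊢
    refine ⟨?_, ?_⟩
    · show τ (π x) = a'; rw [hπ.1]; exact hτa
    · show τ (π y) = b'; rw [hπ.2]; exact hτb
  · intro π hπ
    simp only [Finset.mem_coe, Finset.mem_filter, Finset.mem_univ, true_and] at hπ ⊢
    refine ⟨?_, ?_⟩
    · show τ⁻¹ (π x) = a; rw [hπ.1]; exact hτa'
    · show τ⁻¹ (π y) = b; rw [hπ.2]; exact hτb'
  · intro π _; simp [← mul_assoc]
  · intro π _; simp [← mul_assoc]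

lemma sum_Nab (x y : Fin n) (hxy : x ≠ y) :
    (Finset.univ.offDiag.sum fun p : Fin n × Fin n => Nab x y p.1 p.2) = Nat.factorial n := by
  classical
  have h1 : (Finset.univ : Finset (Equiv.Perm (Fin n))).card = Nat.factorial n := by
    simp [Fintype.card_perm]
  rw [← h1]
  rw [Finset.card_eq_sum_card_fiberwise
    (f := fun π : Equiv.Perm (Fin n) => ((π x, π y) : Fin n × Fin n)) (t := Finset.univ.offDiag)
    (fun π _ => by simpa [Finset.mem_offDiag] using fun h => hxy (π.injective h))]
  apply Finset.sum_congr rfl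
  intro p _
  unfold Nab
  congr 1
  ext π
  simp [Prod.ext_iff]
lemma resid_bound {n ℓ : ℕ} (hl : 0 < ℓ) (hn : 1 ≤ n) (i : ℕ) :
    n / ℓ + (if i < n % ℓ then 1 else 0) ≤ (n - 1) / ℓ + 1 := by
  have hd := Nat.div_add_mod n ℓ
  split_ifs with h
  · have h1 : 1 ≤ n % ℓ := by omega
    have : n / ℓ ≤ (n - 1) / ℓ := by
      rw [Nat.le_div_iff_mul_le hl, mul_comm]
      omega
    omega
  · rw [← Nat.add_div_right _ hl]
    have : n / ℓ ≤ (n - 1 + ℓ) / ℓ := Nat.div_le_div_right (by omega)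
    omega

lemma badpair_bound (ℓ : ℕ) (hl : 0 < ℓ) (hn : 1 ≤ n) (x y : Fin n) (hxy : x ≠ y) :
    (Finset.univ.filter fun π : Equiv.Perm (Fin n) =>
      ((π x : ℕ)) % ℓ = ((π y : ℕ)) % ℓ).card * ℓ ≤ Nat.factorial n := by
  classical
  set D := Finset.univ.offDiag.filter
    (fun p : Fin n × Fin n => ((p.1 : ℕ)) % ℓ = ((p.2 : ℕ)) % ℓ) with hD
  set N := Nab x y x y with hN
  -- step 1 : the bad count equals D.card * N
  have step1 : (Finset.univ.filter fun π : Equiv.Perm (Fin n) =>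
      ((π x : ℕ)) % ℓ = ((π y : ℕ)) % ℓ).card = D.card * N := by
    rw [Finset.card_eq_sum_card_fiberwise
      (f := fun π : Equiv.Perm (Fin n) => ((π x, π y) : Fin n × Fin n)) (t := D)
      (fun π hπ => by
        simp only [Finset.mem_coe, Finset.mem_filter, Finset.mem_univ, true_and] at hπ
        simp only [hD, Finset.mem_coe, Finset.mem_filter, Finset.mem_offDiag, Finset.mem_univ, true_and]
        exact ⟨fun h => hxy (π.injective h), hπ⟩)]
    have hconst : ∀ p ∈ D, ((Finset.univ.filter fun π : Equiv.Perm (Fin n) =>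
        ((π x : ℕ)) % ℓ = ((π y : ℕ)) % ℓ).filter
          (fun π => (π x, π y) = p)).card = N := by
      intro p hp
      have hp' : p ∈ D := hp
      simp only [hD, Finset.mem_filter, Finset.mem_offDiag, Finset.mem_univ, true_and] at hp'
      have h2 : ((Finset.univ.filter fun π : Equiv.Perm (Fin n) =>
          ((π x : ℕ)) % ℓ = ((π y : ℕ)) % ℓ).filter
            (fun π => (π x, π y) = p)).card = Nab x y p.1 p.2 := by
        rw [Finset.filter_filter]
        unfold Nab
        congr 1
        apply Finset.filter_congr
        intro π _
        constructor
        · rintro ⟨h1, h2⟩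
          exact ⟨by rw [← h2], by rw [← h2]⟩
        · rintro ⟨h1, h2⟩
          refine ⟨?_, by rw [h1, h2]⟩
          rw [h1, h2]; exact hp'.2
      rw [h2]
      exact Nab_const x y p.1 p.2 x y hxy hp'.1 hxy
    rw [Finset.sum_congr rfl hconst, Finset.sum_const, smul_eq_mul]
  -- step 2 : n! = offDiag.card * N
  have step2 : (Finset.univ : Finset (Fin n)).offDiag.card * N = Nat.factorial n := by
    have hconst : ∀ p ∈ (Finset.univ.offDiag : Finset (Fin n × Fin n)),
        Nab x y p.1 p.2 = N := by
      intro p hp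
      rw [Finset.mem_offDiag] at hp
      exact Nab_const x y p.1 p.2 x y hxy hp.2.2 hxy
    rw [← sum_Nab x y hxy, Finset.sum_congr rfl hconst, Finset.sum_const, smul_eq_mul]
  -- step 3 : D.card * ℓ ≤ offDiag.card
  have step3 : D.card * ℓ ≤ (Finset.univ : Finset (Fin n)).offDiag.card := by
    have hcard : D.card ≤ n * ((n - 1) / ℓ) := by
      rw [Finset.card_eq_sum_card_fiberwise (f := Prod.fst) (t := Finset.univ)
        (fun p _ => Finset.mem_univ _)]
      have : ∀ a : Fin n, (D.filter fun p => p.1 = a).card ≤ (n - 1) / ℓ := by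
        intro a
        have heq : (D.filter fun p => p.1 = a).card =
            ((Finset.univ.filter fun b : Fin n =>
              (b : ℕ) % ℓ = (a : ℕ) % ℓ).erase a).card := by
          apply Finset.card_nbij (fun p => p.2)
          · intro p hp
            simp only [hD, Finset.mem_filter, Finset.mem_offDiag, Finset.mem_univ, true_and,
              Finset.mem_coe, Finset.mem_erase] at hp ⊢
            obtain ⟨⟨hne, hmod⟩, h1⟩ := hp
            subst h1
            exact ⟨fun h => hne h.symm, by rw [← hmod]⟩
          · intro p hp q hq hpq
            simp only [Finset.mem_coe, Finset.mem_filter] at hp hq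
            exact Prod.ext (hp.2.trans hq.2.symm) hpq
          · intro b hb
            simp only [Finset.mem_coe, Finset.mem_erase, Finset.mem_filter,
              Finset.mem_univ, true_and] at hb
            refine ⟨(a, b), ?_, rfl⟩
            simp only [hD, Finset.mem_coe, Finset.mem_filter, Finset.mem_offDiag,
              Finset.mem_univ, true_and]
            have h1 : a ≠ b := fun h => hb.1 h.symm
            have h2 : (a : ℕ) % ℓ = (b : ℕ) % ℓ := hb.2.symm
            exact ⟨⟨h1, h2⟩, trivial⟩
        rw [heq, Finset.card_erase_of_mem (by simp)]
        rw [count_mod_fin n ℓ hl _ (Nat.mod_lt _ hl)]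
        exact Nat.sub_le_iff_le_add.mpr (resid_bound (n := n) hl hn ((a : ℕ) % ℓ))
      calc ∑ a : Fin n, (D.filter fun p => p.1 = a).card
          ≤ ∑ _a : Fin n, (n - 1) / ℓ := Finset.sum_le_sum (fun a _ => this a)
        _ = n * ((n - 1) / ℓ) := by simp [mul_comm]
    have hoff : (Finset.univ : Finset (Fin n)).offDiag.card = n * n - n := by
      rw [Finset.offDiag_card]
      simp
    rw [hoff]
    calc D.card * ℓ ≤ n * ((n - 1) / ℓ) * ℓ := Nat.mul_le_mul_right _ hcard
      _ = n * ((n - 1) / ℓ * ℓ) := by ring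
      _ ≤ n * (n - 1) := Nat.mul_le_mul_left _ (Nat.div_mul_le_self _ _)
      _ = n * n - n := by cases n <;> simp [Nat.mul_sub, Nat.succ_sub_one] <;> ring_nf <;> omega
  calc (Finset.univ.filter fun π : Equiv.Perm (Fin n) =>
      ((π x : ℕ)) % ℓ = ((π y : ℕ)) % ℓ).card * ℓ
      = D.card * N * ℓ := by rw [step1]
    _ = (D.card * ℓ) * N := by ring
    _ ≤ (Finset.univ : Finset (Fin n)).offDiag.card * N := Nat.mul_le_mul_right _ step3
    _ = Nat.factorial n := step2
lemma imageSize_modmap (n ℓ : ℕ) (hl : 0 < ℓ) :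
    (Finset.univ.image (modmap n ℓ hl)).card = min n ℓ := by
  rw [image_modmap]
  have : ((Finset.univ : Finset (Fin ℓ)).filter (fun i : Fin ℓ => (i : ℕ) < n)).card
      = ((Finset.Iio ℓ).filter (fun i => i < n)).card := by
    rw [← Fin.map_valEmbedding_univ, Finset.filter_map, Finset.card_map]
    rfl
  rw [this]
  have h2 : (Finset.Iio ℓ).filter (fun i => i < n) = Finset.Iio (min ℓ n) := by
    ext j
    simp only [Finset.mem_filter, Finset.mem_Iio, lt_min_iff]
  rw [h2, Nat.card_Iio]
  omega

lemma modmap_bounds (n ℓ : ℕ) (hn : 2 ≤ n) (hl : 0 < ℓ) (i : ℕ) (hi : i < ℓ) (hin : i < n) :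
    n / min n ℓ ≤ n / ℓ + (if i < n % ℓ then 1 else 0) ∧
      n / ℓ + (if i < n % ℓ then 1 else 0) ≤ (n + min n ℓ - 1) / min n ℓ := by
  rcases le_or_gt ℓ n with h | h
  · rw [min_eq_right h]
    constructor
    · exact Nat.le_add_right _ _
    · split_ifs with hb
      · have h1 : 1 ≤ n % ℓ := by omega
        have hd := Nat.div_add_mod n ℓ
        have he : n + ℓ - 1 = (n % ℓ - 1) + ℓ * (n / ℓ + 1) := by
          rw [Nat.mul_add, mul_one]; omega
        rw [he, Nat.add_mul_div_left _ _ hl]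
        have hml := Nat.mod_lt n hl
        have h0 : (n % ℓ - 1) / ℓ = 0 := Nat.div_eq_of_lt (by omega)
        omega
      · have : n ≤ n + ℓ - 1 := by omega
        simpa using Nat.div_le_div_right (c := ℓ) this
  · rw [min_eq_left h.le]
    have h1 : n % ℓ = n := Nat.mod_eq_of_lt h
    have h2 : n / ℓ = 0 := Nat.div_eq_of_lt h
    rw [h1, h2, if_pos hin]
    constructor
    · have : n / n = 1 := Nat.div_self (by omega)
      omega
    · have : (n + n - 1) / n = 1 := by
        apply Nat.div_eq_of_lt_le (by omega) (by omega)
      omega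

/-- There is a constant `C > 0` such that for `n ≥ 16`, `2 ≤ k ≤ n` and `ℓ ≥ k³`,
there is a uniform `(n,k,ℓ)`-splitter of size at most `C·k⁶·log n`. -/
theorem uniform_splitter_main :
    ∃ C : ℝ, 0 < C ∧ ∀ n k ℓ : ℕ, 16 ≤ n → 2 ≤ k → k ≤ n → k ^ 3 ≤ ℓ →
      ∃ F : Finset (Fin n → Fin ℓ),
        IsSplitter n k ℓ F ∧ IsUniformFamily n ℓ F ∧
          (F.card : ℝ) ≤ C * (k : ℝ) ^ 6 * Real.logb 2 n := by
  classical
  refine ⟨2, by norm_num, ?_⟩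
  intro n k ℓ hn hk hkn hkl
  have hl : 0 < ℓ := lt_of_lt_of_le (by positivity) hkl
  have hn1 : 1 ≤ n := by omega
  have hn2 : 2 ≤ n := by omega
  have hk0 : 0 < k := by omega
  have hkℓ : k < ℓ := by
    refine lt_of_lt_of_le ?_ hkl
    calc k < 2 * 2 * k := by omega
      _ ≤ k * k * k := Nat.mul_le_mul (Nat.mul_le_mul hk hk) (le_refl k)
      _ = k ^ 3 := by ring
  set m := k * (Nat.log 2 n + 1) with hm
  set Bad : Finset (Fin n) → Finset (Equiv.Perm (Fin n)) := fun S =>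
    Finset.univ.filter (fun π => ∃ x ∈ S, ∃ y ∈ S, x ≠ y ∧ (π x : ℕ) % ℓ = (π y : ℕ) % ℓ)
    with hBadDef
  have hBad : ∀ S : Finset (Fin n), S.card = k → (Bad S).card * 2 ≤ Nat.factorial n := by
    intro S hS
    have hsub : Bad S ⊆ S.offDiag.biUnion (fun p =>
        Finset.univ.filter fun π : Equiv.Perm (Fin n) =>
          ((π p.1 : ℕ)) % ℓ = ((π p.2 : ℕ)) % ℓ) := by
      intro π hπ
      simp only [hBadDef, Finset.mem_filter, Finset.mem_univ, true_and] at hπ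
      obtain ⟨x, hx, y, hy, hne, hmod⟩ := hπ
      exact Finset.mem_biUnion.2 ⟨(x, y), Finset.mem_offDiag.2 ⟨hx, hy, hne⟩,
        Finset.mem_filter.2 ⟨Finset.mem_univ _, hmod⟩⟩
    have h1 : (Bad S).card ≤ ∑ p ∈ S.offDiag,
        (Finset.univ.filter fun π : Equiv.Perm (Fin n) =>
          ((π p.1 : ℕ)) % ℓ = ((π p.2 : ℕ)) % ℓ).card :=
      (Finset.card_le_card hsub).trans Finset.card_biUnion_le
    have h2 : (Bad S).card * ℓ ≤ (k * k) * Nat.factorial n := by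
      calc (Bad S).card * ℓ
          ≤ (∑ p ∈ S.offDiag, (Finset.univ.filter fun π : Equiv.Perm (Fin n) =>
              ((π p.1 : ℕ)) % ℓ = ((π p.2 : ℕ)) % ℓ).card) * ℓ := Nat.mul_le_mul_right _ h1
        _ = ∑ p ∈ S.offDiag, (Finset.univ.filter fun π : Equiv.Perm (Fin n) =>
              ((π p.1 : ℕ)) % ℓ = ((π p.2 : ℕ)) % ℓ).card * ℓ := Finset.sum_mul _ _ _
        _ ≤ ∑ _p ∈ S.offDiag, Nat.factorial n := by
            refine Finset.sum_le_sum fun p hp => ?_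
            rw [Finset.mem_offDiag] at hp
            exact badpair_bound ℓ hl hn1 p.1 p.2 hp.2.2
        _ = S.offDiag.card * Nat.factorial n := by rw [Finset.sum_const, smul_eq_mul]
        _ ≤ (k * k) * Nat.factorial n := by
            apply Nat.mul_le_mul_right
            rw [Finset.offDiag_card, hS]
            omega
    have h3 : (Bad S).card * k ≤ Nat.factorial n := by
      have hx : (k * k) * ((Bad S).card * k) ≤ (k * k) * Nat.factorial n := by
        calc (k * k) * ((Bad S).card * k) = (Bad S).card * (k ^ 3) := by ring
          _ ≤ (Bad S).card * ℓ := Nat.mul_le_mul_left _ hkl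
          _ ≤ (k * k) * Nat.factorial n := h2
      exact Nat.le_of_mul_le_mul_left hx (by positivity)
    calc (Bad S).card * 2 ≤ (Bad S).card * k := Nat.mul_le_mul_left _ hk
      _ ≤ Nat.factorial n := h3
  -- counting over tuples of permutations
  have hm2 : n ^ k < 2 ^ m := by
    have h0 : n < 2 ^ (Nat.log 2 n + 1) := Nat.lt_pow_succ_log_self (by norm_num) n
    calc n ^ k < (2 ^ (Nat.log 2 n + 1)) ^ k := Nat.pow_lt_pow_left h0 (by omega)
      _ = 2 ^ m := by rw [← pow_mul, hm, Nat.mul_comm]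
  set BadT : Finset (Fin m → Equiv.Perm (Fin n)) := Finset.univ.filter
    (fun g => ∃ S ∈ Finset.powersetCard k (Finset.univ : Finset (Fin n)), ∀ j, g j ∈ Bad S)
    with hBadT
  have hBT : BadT.card < Nat.factorial n ^ m := by
    have hsub : BadT ⊆ (Finset.powersetCard k (Finset.univ : Finset (Fin n))).biUnion
        (fun S => Fintype.piFinset (fun _ : Fin m => Bad S)) := by
      intro g hg
      simp only [hBadT, Finset.mem_filter, Finset.mem_univ, true_and] at hg
      obtain ⟨S, hS, hall⟩ := hg
      exact Finset.mem_biUnion.2 ⟨S, hS, Fintype.mem_piFinset.2 (fun j => hall j)⟩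
    have h1 : BadT.card ≤ ∑ S ∈ Finset.powersetCard k (Finset.univ : Finset (Fin n)),
        (Bad S).card ^ m := by
      refine (Finset.card_le_card hsub).trans (Finset.card_biUnion_le.trans ?_)
      refine Finset.sum_le_sum fun S hS => ?_
      rw [Fintype.card_piFinset]
      simp
    have hfacpos : 0 < Nat.factorial n ^ m := by positivity
    have key : BadT.card * 2 ^ m < Nat.factorial n ^ m * 2 ^ m := by
      calc BadT.card * 2 ^ m
          ≤ (∑ S ∈ Finset.powersetCard k (Finset.univ : Finset (Fin n)),
              (Bad S).card ^ m) * 2 ^ m := Nat.mul_le_mul_right _ h1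
        _ = ∑ S ∈ Finset.powersetCard k (Finset.univ : Finset (Fin n)),
              ((Bad S).card * 2) ^ m := by
            rw [Finset.sum_mul]
            exact Finset.sum_congr rfl fun S _ => (mul_pow _ _ _).symm
        _ ≤ ∑ _S ∈ Finset.powersetCard k (Finset.univ : Finset (Fin n)),
              Nat.factorial n ^ m := by
            refine Finset.sum_le_sum fun S hS => ?_
            exact Nat.pow_le_pow_left (hBad S (Finset.mem_powersetCard_univ.1 hS)) m
        _ = n.choose k * Nat.factorial n ^ m := by
            rw [Finset.sum_const, smul_eq_mul, Finset.card_powersetCard, Finset.card_univ,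
              Fintype.card_fin]
        _ ≤ n ^ k * Nat.factorial n ^ m := Nat.mul_le_mul_right _ (Nat.choose_le_pow n k)
        _ < 2 ^ m * Nat.factorial n ^ m := (Nat.mul_lt_mul_right hfacpos).2 hm2
        _ = Nat.factorial n ^ m * 2 ^ m := Nat.mul_comm _ _
    exact Nat.lt_of_mul_lt_mul_right key
  obtain ⟨g, hg⟩ : ∃ g : Fin m → Equiv.Perm (Fin n), g ∉ BadT := by
    by_contra hcon
    push_neg at hcon
    have h1 : (Finset.univ : Finset (Fin m → Equiv.Perm (Fin n))).card ≤ BadT.card :=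
      Finset.card_le_card (fun g _ => hcon g)
    rw [Finset.card_univ, Fintype.card_fun, Fintype.card_perm, Fintype.card_fin,
      Fintype.card_fin] at h1
    omega
  have hgood : ∀ S : Finset (Fin n), S.card = k → ∃ j : Fin m, g j ∉ Bad S := by
    intro S hS
    by_contra hcon
    push_neg at hcon
    exact hg (Finset.mem_filter.2 ⟨Finset.mem_univ _,
      S, Finset.mem_powersetCard_univ.2 hS, hcon⟩)
  refine ⟨Finset.univ.image (fun j : Fin m => modmap n ℓ hl ∘ g j), ?_, ?_, ?_⟩
  · -- splitter
    intro S hS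
    obtain ⟨j, hj⟩ := hgood S hS
    refine ⟨modmap n ℓ hl ∘ g j, Finset.mem_image.2 ⟨j, Finset.mem_univ _, rfl⟩, ?_⟩
    intro i
    have hone : (S.filter fun x => (modmap n ℓ hl ∘ g j) x = i).card ≤ 1 := by
      apply Finset.card_le_one.2
      intro a ha b hb
      rw [Finset.mem_filter] at ha hb
      by_contra hab
      apply hj
      simp only [hBadDef, Finset.mem_filter, Finset.mem_univ, true_and]
      refine ⟨a, ha.1, b, hb.1, hab, ?_⟩
      have h5 : modmap n ℓ hl (g j a) = modmap n ℓ hl (g j b) := ha.2.trans hb.2.symm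
      simpa [modmap, Fin.ext_iff] using h5
    have htwo : 1 ≤ (k + ℓ - 1) / ℓ := (Nat.one_le_div_iff hl).2 (by omega)
    rw [Nat.div_eq_of_lt hkℓ]
    omega
  · -- uniform
    intro f hf i hi
    obtain ⟨j, -, rfl⟩ := Finset.mem_image.1 hf
    have himg : Finset.univ.image (modmap n ℓ hl ∘ g j)
        = Finset.univ.image (modmap n ℓ hl) := by
      rw [← Finset.image_image (g := modmap n ℓ hl) (f := ⇑(g j)),
        Finset.image_univ_equiv]
    have hpre : preimCard (modmap n ℓ hl ∘ g j) i = preimCard (modmap n ℓ hl) i := by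
      unfold preimCard
      apply Finset.card_nbij' (fun x => (g j) x) (fun x => (g j)⁻¹ x)
      · intro x hx
        simp only [Finset.mem_coe, Finset.mem_filter, Finset.mem_univ, true_and,
          Function.comp_apply] at hx ⊢
        exact hx
      · intro x hx
        simp only [Finset.mem_coe, Finset.mem_filter, Finset.mem_univ, true_and,
          Function.comp_apply] at hx ⊢
        simpa using hx
      · intro x _; simp
      · intro x _; simp
    have himgsize : imageSize (modmap n ℓ hl ∘ g j) = min n ℓ := by
      unfold imageSize
      rw [himg, imageSize_modmap]
    have hiv : (i : ℕ) < n := by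
      rw [himg, image_modmap] at hi
      exact (Finset.mem_filter.1 hi).2
    have hbounds := modmap_bounds n ℓ hn2 hl i i.isLt hiv
    have hval : preimCard (modmap n ℓ hl) i = n / ℓ + if (i : ℕ) < n % ℓ then 1 else 0 :=
      preim_modmap n ℓ hl i
    rw [hpre, himgsize, hval]
    exact hbounds
  · -- cardinality
    have hFle : (Finset.univ.image (fun j : Fin m => modmap n ℓ hl ∘ g j)).card ≤ m :=
      Finset.card_image_le.trans (by simp)
    have hlog : (Nat.log 2 n : ℝ) ≤ Real.logb 2 n := Real.natLog_le_logb n 2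
    have hlogb4 : (4 : ℝ) ≤ Real.logb 2 n := by
      have h16 : ((16 : ℕ) : ℝ) ≤ (n : ℝ) := by exact_mod_cast hn
      have : Real.logb 2 16 ≤ Real.logb 2 n := by
        apply Real.logb_le_logb_of_le (by norm_num) (by norm_num)
        exact_mod_cast hn
      have h4 : Real.logb 2 16 = 4 := by
        rw [show (16 : ℝ) = 2 ^ (4 : ℕ) by norm_num, Real.logb_pow]
        simp [Real.logb_self_eq_one]
      linarith
    have hk2 : (2 : ℝ) ≤ (k : ℝ) := by exact_mod_cast hk
    have hk6 : (k : ℝ) ≤ (k : ℝ) ^ 6 := by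
      calc (k : ℝ) = (k : ℝ) ^ 1 := (pow_one _).symm
        _ ≤ (k : ℝ) ^ 6 := pow_le_pow_right₀ (by linarith) (by norm_num)
    calc ((Finset.univ.image (fun j : Fin m => modmap n ℓ hl ∘ g j)).card : ℝ)
        ≤ (m : ℝ) := by exact_mod_cast hFle
      _ = (k : ℝ) * ((Nat.log 2 n : ℝ) + 1) := by rw [hm]; push_cast; ring
      _ ≤ (k : ℝ) * (2 * Real.logb 2 n) := by nlinarith
      _ ≤ 2 * (k : ℝ) ^ 6 * Real.logb 2 n := by nlinarith
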